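/- arXiv:0708.4247 — 5 statements merged into one kernel-verified Lean document; each statement's English description precedes it below -/
import Mathlib

section
/- Let (B, p⊥, τ) be a static anisotropic (CGL) plasma equilibrium on ℝ³ with τ(x) < 1 for every x. Define B̃ := √(1 − τ) B and the mean pressure p := p⊥ + τ |B|²/2. Then curl B̃ × B̃ = grad p and div B̃ = 0 everywhere on ℝ³; that is, (B̃, p) is a static isotropic (MHD) plasma equilibrium. -/
open Matrix

noncomputable section

abbrev R3 : Type := Fin 3 → ℝ

/-- Partial derivative in the `i`-th coordinate direction. -/
def pd (i : Fin 3) (f : R3 → ℝ) (x : R3) : ℝ := fderiv ℝ f x (Pi.single i 1)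

/-- Gradient of a scalar field on ℝ³. -/
def grad3 (f : R3 → ℝ) (x : R3) : R3 := fun i => pd i f x

/-- Divergence of a vector field on ℝ³. -/
def div3 (B : R3 → R3) (x : R3) : ℝ := ∑ i, pd i (fun y => B y i) x

/-- Curl of a vector field on ℝ³. -/
def curl3 (B : R3 → R3) (x : R3) : R3 :=
  ![pd 1 (fun y => B y 2) x - pd 2 (fun y => B y 1) x,
    pd 2 (fun y => B y 0) x - pd 0 (fun y => B y 2) x,
    pd 0 (fun y => B y 1) x - pd 1 (fun y => B y 0) x]

lemma pd_mul' {f g : R3 → ℝ} {x : R3} (hf : DifferentiableAt ℝ f x)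
    (hg : DifferentiableAt ℝ g x) (i : Fin 3) :
    pd i (fun y => f y * g y) x = pd i f x * g x + f x * pd i g x := by
  unfold pd
  rw [fderiv_fun_mul hf hg]
  simp only [ContinuousLinearMap.add_apply, ContinuousLinearMap.smul_apply, smul_eq_mul]
  ring

lemma pd_add' {f g : R3 → ℝ} {x : R3} (hf : DifferentiableAt ℝ f x)
    (hg : DifferentiableAt ℝ g x) (i : Fin 3) :
    pd i (fun y => f y + g y) x = pd i f x + pd i g x := by
  unfold pd
  rw [fderiv_fun_add hf hg]
  simp

/-- A static anisotropic (CGL) equilibrium `(B, p⊥, τ)` with `τ < 1` gives rise to a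
static isotropic (MHD) equilibrium `(B̃, p)` where `B̃ = √(1−τ) B` and `p = p⊥ + τ|B|²/2`. -/
theorem cgl_to_mhd
    (B : R3 → R3) (pperp τ : R3 → ℝ)
    (hB : ContDiff ℝ (⊤ : ℕ∞) B) (hpperp : ContDiff ℝ (⊤ : ℕ∞) pperp)
    (hτ : ContDiff ℝ (⊤ : ℕ∞) τ)
    (hτlt : ∀ x, τ x < 1)
    (hmom : ∀ x, (1 - τ x) • crossProduct (curl3 B x) (B x) =
      grad3 pperp x + τ x • grad3 (fun y => (B y ⬝ᵥ B y) / 2) x + (B x ⬝ᵥ grad3 τ x) • B x)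
    (hdiv : ∀ x, div3 B x = 0)
    (hstate : ∀ x, B x ⬝ᵥ grad3 τ x = 0)
    (Bt : R3 → R3) (hBt : Bt = fun x => Real.sqrt (1 - τ x) • B x)
    (p : R3 → ℝ) (hp : p = fun x => pperp x + τ x * (B x ⬝ᵥ B x) / 2) :
    (∀ x, crossProduct (curl3 Bt x) (Bt x) = grad3 p x) ∧ (∀ x, div3 Bt x = 0) := by
  subst hBt hp
  have hτd : Differentiable ℝ τ := hτ.differentiable (by simp)
  have hppd : Differentiable ℝ pperp := hpperp.differentiable (by simp)
  have hBj : ∀ j, Differentiable ℝ (fun y => B y j) :=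
    differentiable_pi.1 (hB.differentiable (by simp))
  have hpos : ∀ x, 0 < 1 - τ x := fun x => by linarith [hτlt x]
  have hsne : ∀ x, Real.sqrt (1 - τ x) ≠ 0 :=
    fun x => ne_of_gt (Real.sqrt_pos.2 (hpos x))
  have hsF : ∀ x, HasFDerivAt (fun y => Real.sqrt (1 - τ y))
      ((1 / (2 * Real.sqrt (1 - τ x))) • (-(fderiv ℝ τ x))) x := by
    intro x
    exact (Real.hasDerivAt_sqrt (ne_of_gt (hpos x))).comp_hasFDerivAt x
      (((hτd x).hasFDerivAt).const_sub 1)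
  have hsd : Differentiable ℝ (fun y => Real.sqrt (1 - τ y)) :=
    fun x => (hsF x).differentiableAt
  have hss : ∀ x (i : Fin 3), Real.sqrt (1 - τ x) * pd i (fun y => Real.sqrt (1 - τ y)) x
      = - pd i τ x / 2 := by
    intro x i
    unfold pd
    rw [(hsF x).fderiv]
    simp only [ContinuousLinearMap.smul_apply, ContinuousLinearMap.neg_apply, smul_eq_mul]
    field_simp [hsne x]
  have hs2 : ∀ x, Real.sqrt (1 - τ x) * Real.sqrt (1 - τ x) = 1 - τ x :=
    fun x => Real.mul_self_sqrt (le_of_lt (hpos x))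
  have hprod : ∀ x (i j : Fin 3),
      pd i (fun y => Real.sqrt (1 - τ y) * B y j) x
        = pd i (fun y => Real.sqrt (1 - τ y)) x * B x j
          + Real.sqrt (1 - τ x) * pd i (fun y => B y j) x :=
    fun x i j => pd_mul' (hsd x) (hBj j x) i
  have hQeq : (fun y => (B y ⬝ᵥ B y) / 2)
      = fun y => (B y 0 * B y 0 + B y 1 * B y 1 + B y 2 * B y 2) / 2 := by
    funext y; simp [dotProduct, Fin.sum_univ_three]
  have hQd : Differentiable ℝ (fun y => (B y ⬝ᵥ B y) / 2) := by
    rw [hQeq]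
    have h1 : Differentiable ℝ (fun y => B y 0 * B y 0 + B y 1 * B y 1 + B y 2 * B y 2) :=
      (((hBj 0).mul (hBj 0)).add ((hBj 1).mul (hBj 1))).add ((hBj 2).mul (hBj 2))
    fun_prop
  have hpeq : (fun y => pperp y + τ y * (B y ⬝ᵥ B y) / 2)
      = fun y => pperp y + τ y * ((B y ⬝ᵥ B y) / 2) := by funext y; ring
  have hpd : ∀ x (i : Fin 3), pd i (fun y => pperp y + τ y * (B y ⬝ᵥ B y) / 2) x
      = pd i pperp x + (pd i τ x * ((B x ⬝ᵥ B x) / 2)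
        + τ x * pd i (fun y => (B y ⬝ᵥ B y) / 2) x) := by
    intro x i
    rw [hpeq, pd_add' (g := fun y => τ y * ((B y ⬝ᵥ B y) / 2)) (hppd x) ((hτd x).mul (hQd x)) i, pd_mul' (hτd x) (hQd x) i]
  have hst : ∀ x, B x 0 * pd 0 τ x + B x 1 * pd 1 τ x + B x 2 * pd 2 τ x = 0 := by
    intro x
    have h := hstate x
    simpa [dotProduct, grad3, Fin.sum_univ_three] using h
  have hdv : ∀ x, pd 0 (fun y => B y 0) x + pd 1 (fun y => B y 1) x
      + pd 2 (fun y => B y 2) x = 0 := by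
    intro x
    have h := hdiv x
    simpa [div3, Fin.sum_univ_three] using h
  have hQx : ∀ x, (B x ⬝ᵥ B x) / 2
      = (B x 0 * B x 0 + B x 1 * B x 1 + B x 2 * B x 2) / 2 := by
    intro x; simp [dotProduct, Fin.sum_univ_three]
  have hsB : ∀ x, pd 0 (fun y => Real.sqrt (1 - τ y)) x * B x 0
      + pd 1 (fun y => Real.sqrt (1 - τ y)) x * B x 1
      + pd 2 (fun y => Real.sqrt (1 - τ y)) x * B x 2 = 0 := by
    intro x
    have hx : Real.sqrt (1 - τ x) * (pd 0 (fun y => Real.sqrt (1 - τ y)) x * B x 0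
        + pd 1 (fun y => Real.sqrt (1 - τ y)) x * B x 1
        + pd 2 (fun y => Real.sqrt (1 - τ y)) x * B x 2) = 0 := by
      linear_combination B x 0 * hss x 0 + B x 1 * hss x 1 + B x 2 * hss x 2 - (1/2) * hst x
    exact (mul_eq_zero.1 hx).resolve_left (hsne x)
  have hmom' : ∀ x (i : Fin 3),
      (1 - τ x) * ((crossProduct (curl3 B x)) (B x) i)
        = pd i pperp x + τ x * pd i (fun y => (B y ⬝ᵥ B y) / 2) x := by
    intro x i
    have h := congrFun (hmom x) i
    rw [hstate x] at h
    simpa [grad3] using h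
  constructor
  · intro x
    funext i
    fin_cases i
    · have e := hmom' x 0
      simp only [cross_apply, curl3, Matrix.cons_val_zero, Matrix.cons_val_one, Matrix.head_cons,
        Matrix.cons_val_two, Matrix.tail_cons] at e
      simp only [Fin.zero_eta, Fin.isValue, curl3, cross_apply, grad3, Pi.smul_apply,
        smul_eq_mul, Matrix.cons_val_zero, Matrix.cons_val_one, Matrix.head_cons,
        Matrix.cons_val_two, Matrix.tail_cons]
      rw [hpd x 0, hQx x]
      simp only [hprod]
      linear_combination ((pd 2 (fun y => B y 0) x - pd 0 (fun y => B y 2) x) * B x 2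
          - (pd 0 (fun y => B y 1) x - pd 1 (fun y => B y 0) x) * B x 1) * hs2 x
        + e + (B x 0 * B x 2) * hss x 2 + (B x 0 * B x 1) * hss x 1
        - (B x 1 * B x 1 + B x 2 * B x 2) * hss x 0 - (B x 0 / 2) * hst x
    · have e := hmom' x 1
      simp only [cross_apply, curl3, Matrix.cons_val_zero, Matrix.cons_val_one, Matrix.head_cons,
        Matrix.cons_val_two, Matrix.tail_cons] at e
      simp only [Fin.mk_one, Fin.isValue, curl3, cross_apply, grad3, Pi.smul_apply,
        smul_eq_mul, Matrix.cons_val_zero, Matrix.cons_val_one, Matrix.head_cons,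
        Matrix.cons_val_two, Matrix.tail_cons]
      rw [hpd x 1, hQx x]
      simp only [hprod]
      linear_combination ((pd 0 (fun y => B y 1) x - pd 1 (fun y => B y 0) x) * B x 0
          - (pd 1 (fun y => B y 2) x - pd 2 (fun y => B y 1) x) * B x 2) * hs2 x
        + e + (B x 1 * B x 0) * hss x 0 + (B x 1 * B x 2) * hss x 2
        - (B x 2 * B x 2 + B x 0 * B x 0) * hss x 1 - (B x 1 / 2) * hst x
    · have e := hmom' x 2
      simp only [cross_apply, curl3, Matrix.cons_val_zero, Matrix.cons_val_one, Matrix.head_cons,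
        Matrix.cons_val_two, Matrix.tail_cons] at e
      simp only [Fin.isValue, curl3, cross_apply, grad3, Pi.smul_apply,
        smul_eq_mul, Matrix.cons_val_zero, Matrix.cons_val_one, Matrix.head_cons,
        Matrix.cons_val_two, Matrix.tail_cons, show (⟨2, by omega⟩ : Fin 3) = 2 from rfl]
      rw [hpd x 2, hQx x]
      simp only [hprod]
      linear_combination ((pd 1 (fun y => B y 2) x - pd 2 (fun y => B y 1) x) * B x 1
          - (pd 2 (fun y => B y 0) x - pd 0 (fun y => B y 2) x) * B x 0) * hs2 x
        + e + (B x 2 * B x 1) * hss x 1 + (B x 2 * B x 0) * hss x 0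
        - (B x 0 * B x 0 + B x 1 * B x 1) * hss x 2 - (B x 2 / 2) * hst x
  · intro x
    simp only [div3, Fin.sum_univ_three, Pi.smul_apply, smul_eq_mul]
    simp only [hprod]
    linear_combination hsB x + Real.sqrt (1 - τ x) * hdv x
end
end

section
/- Let B : ℝ³ → ℝ³, p⊥ : ℝ³ → ℝ, τ : ℝ³ → ℝ be any fields with τ(x) ≤ 1 everywhere, and let M : ℝ³ → ℝ satisfy M(x) > 0 for all x. Define B′ := M B, τ′ := 1 − (1 − τ)/M², and p⊥′ := p⊥ + (|B|² − |B′|²)/2. Then pointwise: (i) 1 − τ′ = (1 − τ)/M², so τ′(x) ≤ 1 everywhere; (ii) √(1 − τ′) B′ = √(1 − τ) B; and (iii) p⊥′ + τ′ |B′|²/2 = p⊥ + τ |B|²/2, i.e. the field √(1 − τ) B and the mean pressure p = p⊥ + τ|B|²/2 are invariant under the infinite-dimensional symmetry transformations of the static CGL system. -/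
open Matrix

noncomputable section

/-- Pointwise algebraic invariants of the infinite CGL symmetry
transformations: `1 − τ′ = (1 − τ)/M²` (so `τ′ ≤ 1`), `√(1−τ′) B′ = √(1−τ) B`,
and the mean pressure `p⊥ + τ|B|²/2` is invariant. -/
theorem cgl_symmetry_invariants
    (B : R3 → R3) (pperp τ M : R3 → ℝ)
    (hτ : ∀ x, τ x ≤ 1) (hM : ∀ x, 0 < M x)
    (B' : R3 → R3) (hB' : B' = fun x => M x • B x)
    (τ' : R3 → ℝ) (hτ' : τ' = fun x => 1 - (1 - τ x) / (M x) ^ 2)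
    (pperp' : R3 → ℝ)
    (hpperp' : pperp' = fun x => pperp x + (B x ⬝ᵥ B x - B' x ⬝ᵥ B' x) / 2) :
    (∀ x, 1 - τ' x = (1 - τ x) / (M x) ^ 2) ∧ (∀ x, τ' x ≤ 1) ∧
    (∀ x, Real.sqrt (1 - τ' x) • B' x = Real.sqrt (1 - τ x) • B x) ∧
    (∀ x, pperp' x + τ' x * (B' x ⬝ᵥ B' x) / 2 = pperp x + τ x * (B x ⬝ᵥ B x) / 2) := by
  subst hB' hτ' hpperp'
  refine ⟨fun x => by ring, fun x => ?_, fun x => ?_, fun x => ?_⟩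
  · have h1 := hτ x; have h2 := hM x
    have : 0 ≤ (1 - τ x) / (M x) ^ 2 := div_nonneg (by linarith [hτ x]) (sq_nonneg _)
    simp only []
    linarith
  · have h2 := (hM x).ne'
    have hsq : Real.sqrt (1 - (1 - (1 - τ x) / (M x) ^ 2)) =
        Real.sqrt (1 - τ x) / M x := by
      rw [show 1 - (1 - (1 - τ x) / (M x) ^ 2) = (1 - τ x) / (M x)^2 by ring,
        Real.sqrt_div (by linarith [hτ x]), Real.sqrt_sq (hM x).le]
    simp only [hsq, smul_smul]
    congr 1
    field_simp
  · have h2 := (hM x).ne'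
    simp only [smul_dotProduct, dotProduct_smul, smul_eq_mul]
    field_simp
    ring
end
end

section
/- Let B : ℝ³ → ℝ³, p⊥ : ℝ³ → ℝ, τ : ℝ³ → ℝ be fields, let M : ℝ³ → ℝ satisfy M(x) ≠ 0 for all x, and define the transformed fields B′ := M B, τ′ := 1 − (1 − τ)/M², p⊥′ := p⊥ + (|B|² − |B′|²)/2. Set p∥ := p⊥ + τ|B|² and p∥′ := p⊥′ + τ′|B′|². Then at every point: 1 − τ′ = (1 − τ)/M², and consequently the fire-hose instability condition p∥ − p⊥ > |B|² (equivalently τ > 1) holds at a point if and only if p∥′ − p⊥′ > |B′|² (equivalently τ′ > 1) holds there; i.e. the infinite symmetry transformations do not change fire-hose stability or instability of the plasma configuration. -/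
open Matrix

noncomputable section

/-- The infinite CGL symmetry transformations preserve the fire-hose
instability condition `p∥ − p⊥ > |B|²`: it holds at a point for the original
configuration iff it holds there for the transformed one. -/
theorem cgl_firehose_invariance
    (B : R3 → R3) (pperp τ M : R3 → ℝ) (hM : ∀ x, M x ≠ 0)
    (B' : R3 → R3) (hB' : B' = fun x => M x • B x)
    (τ' : R3 → ℝ) (hτ' : τ' = fun x => 1 - (1 - τ x) / (M x) ^ 2)
    (pperp' : R3 → ℝ)
    (hpperp' : pperp' = fun x => pperp x + (B x ⬝ᵥ B x - B' x ⬝ᵥ B' x) / 2)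
    (ppar : R3 → ℝ) (hppar : ppar = fun x => pperp x + τ x * (B x ⬝ᵥ B x))
    (ppar' : R3 → ℝ) (hppar' : ppar' = fun x => pperp' x + τ' x * (B' x ⬝ᵥ B' x)) :
    (∀ x, 1 - τ' x = (1 - τ x) / (M x) ^ 2) ∧
    (∀ x, (ppar x - pperp x > B x ⬝ᵥ B x ↔ ppar' x - pperp' x > B' x ⬝ᵥ B' x)) := by
  subst hB' hτ' hpperp' hppar hppar'
  refine ⟨fun x => by ring, fun x => ?_⟩
  have hM2 : (M x)^2 > 0 := by have := hM x; positivity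
  have hd : (M x • B x) ⬝ᵥ (M x • B x) = (M x)^2 * (B x ⬝ᵥ B x) := by
    simp only [dotProduct, Pi.smul_apply, smul_eq_mul, Finset.mul_sum]
    exact Finset.sum_congr rfl fun i _ => by ring
  simp only [hd]
  constructor
  · intro h
    have h1 : (τ x - 1) * (B x ⬝ᵥ B x) > 0 := by nlinarith
    have : (1 - (1 - τ x) / (M x)^2 - 1) * ((M x)^2 * (B x ⬝ᵥ B x)) = (τ x - 1) * (B x ⬝ᵥ B x) := by
      have := hM x; field_simp; ring
    nlinarith
  · intro h
    have h1 : (1 - (1 - τ x) / (M x)^2 - 1) * ((M x)^2 * (B x ⬝ᵥ B x)) = (τ x - 1) * (B x ⬝ᵥ B x) := by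
      have := hM x; field_simp; ring
    nlinarith
end
end

section
/- For a nowhere-vanishing function M : ℝ³ → ℝ, define the transformation T_M acting on triples of fields (B, p⊥, τ) (B : ℝ³ → ℝ³, p⊥, τ : ℝ³ → ℝ) by T_M(B, p⊥, τ) := (M B, p⊥ + (1 − M²)|B|²/2, 1 − (1 − τ)/M²). Then for any nowhere-vanishing M₁, M₂ : ℝ³ → ℝ and any triple (B, p⊥, τ): T_{M₂}(T_{M₁}(B, p⊥, τ)) = T_{M₁ M₂}(B, p⊥, τ); T_1 is the identity transformation; and T_{1/M}(T_M(B, p⊥, τ)) = (B, p⊥, τ). In particular these transformations form an abelian group under composition. -/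
open Matrix

noncomputable section

def Tmap (M : R3 → ℝ) (t : (R3 → R3) × (R3 → ℝ) × (R3 → ℝ)) :
    (R3 → R3) × (R3 → ℝ) × (R3 → ℝ) :=
  (fun x => M x • t.1 x,
   fun x => t.2.1 x + (1 - (M x) ^ 2) * (t.1 x ⬝ᵥ t.1 x) / 2,
   fun x => 1 - (1 - t.2.2 x) / (M x) ^ 2)

lemma Tmap_comp (M₁ M₂ : R3 → ℝ) (t : (R3 → R3) × (R3 → ℝ) × (R3 → ℝ)) :
    Tmap M₂ (Tmap M₁ t) = Tmap (fun x => M₁ x * M₂ x) t := by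
  obtain ⟨B, p, τ⟩ := t
  refine Prod.ext ?_ (Prod.ext ?_ ?_) <;> funext x <;>
    simp only [Tmap, smul_smul, smul_dotProduct, dotProduct_smul, smul_eq_mul]
  · ring_nf
  · ring
  · rw [sub_sub_cancel, div_div, mul_pow]

/-- The transformations `T_M` compose as `T_{M₂} ∘ T_{M₁} = T_{M₁M₂}`,
`T_1` is the identity, and `T_{1/M}` inverts `T_M`; hence they form an abelian group. -/
theorem Tmap_group
    (M₁ M₂ M : R3 → ℝ) (hM₁ : ∀ x, M₁ x ≠ 0) (hM₂ : ∀ x, M₂ x ≠ 0) (hM : ∀ x, M x ≠ 0)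
    (t : (R3 → R3) × (R3 → ℝ) × (R3 → ℝ)) :
    Tmap M₂ (Tmap M₁ t) = Tmap (fun x => M₁ x * M₂ x) t ∧
    Tmap (fun _ => 1) t = t ∧
    Tmap (fun x => (M x)⁻¹) (Tmap M t) = t ∧
    Tmap M₂ (Tmap M₁ t) = Tmap M₁ (Tmap M₂ t) := by
  have hid : Tmap (fun _ => 1) t = t := by
    obtain ⟨B, p, τ⟩ := t
    refine Prod.ext ?_ (Prod.ext ?_ ?_) <;> funext x <;> simp [Tmap]
  refine ⟨Tmap_comp M₁ M₂ t, hid, ?_, by rw [Tmap_comp, Tmap_comp]; congr 1; funext x; ring⟩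
  rw [Tmap_comp]
  have : (fun x => M x * (M x)⁻¹) = (fun _ : R3 => (1:ℝ)) := by
    funext x; exact mul_inv_cancel₀ (hM x)
  rw [this, hid]
end
end

section
/- Let (B, P) be a static isotropic (MHD) plasma equilibrium on ℝ³, let M : ℝ³ → ℝ be smooth with M(x) ≠ 0 for all x and B · grad M = 0 everywhere, and let P₁ be a real constant. Define B′ := M B, τ′ := 1 − 1/M², p⊥′ := P₁ + P + (1 − M²)|B|²/2, and p∥′ := P₁ + P − (1 − M²)|B|²/2. Then p∥′ − p⊥′ = τ′ |B′|², and (B′, p⊥′, τ′) is a static anisotropic (CGL) plasma equilibrium: (1 − τ′)(curl B′) × B′ = grad p⊥′ + τ′ grad(|B′|²/2) + (B′ · grad τ′) B′, div B′ = 0, and B′ · grad τ′ = 0 everywhere. Moreover B′ is everywhere parallel to B, so the new solution has the same set of magnetic field lines as the original one. -/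
open Matrix

noncomputable section

lemma pd_eq' {f : R3 → ℝ} {f' : R3 →L[ℝ] ℝ} {x : R3} (h : HasFDerivAt f f' x) (i : Fin 3) :
    pd i f x = f' (Pi.single i 1) := by rw [pd, h.fderiv]

/-- From a static isotropic MHD equilibrium `(B, P)` and any smooth nowhere-zero
`M` constant along field lines, the fields `B′ = MB`, `τ′ = 1 − 1/M²`,
`p⊥′ = P₁ + P + (1−M²)|B|²/2`, `p∥′ = P₁ + P − (1−M²)|B|²/2` form a static anisotropic
(CGL) equilibrium with `p∥′ − p⊥′ = τ′|B′|²`, and `B′` is everywhere parallel to `B`. -/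
theorem mhd_generates_cgl_family
    (B : R3 → R3) (P : R3 → ℝ)
    (hB : ContDiff ℝ (⊤ : ℕ∞) B) (hP : ContDiff ℝ (⊤ : ℕ∞) P)
    (hmom : ∀ x, crossProduct (curl3 B x) (B x) = grad3 P x)
    (hdiv : ∀ x, div3 B x = 0)
    (M : R3 → ℝ) (hM : ContDiff ℝ (⊤ : ℕ∞) M) (hM0 : ∀ x, M x ≠ 0)
    (hMline : ∀ x, B x ⬝ᵥ grad3 M x = 0)
    (P₁ : ℝ)
    (B' : R3 → R3) (hB' : B' = fun x => M x • B x)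
    (τ' : R3 → ℝ) (hτ' : τ' = fun x => 1 - 1 / (M x) ^ 2)
    (pperp' : R3 → ℝ)
    (hpperp' : pperp' = fun x => P₁ + P x + (1 - (M x) ^ 2) * (B x ⬝ᵥ B x) / 2)
    (ppar' : R3 → ℝ)
    (hppar' : ppar' = fun x => P₁ + P x - (1 - (M x) ^ 2) * (B x ⬝ᵥ B x) / 2) :
    (∀ x, ppar' x - pperp' x = τ' x * (B' x ⬝ᵥ B' x)) ∧
    (∀ x, (1 - τ' x) • crossProduct (curl3 B' x) (B' x) =
      grad3 pperp' x + τ' x • grad3 (fun y => (B' y ⬝ᵥ B' y) / 2) x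
        + (B' x ⬝ᵥ grad3 τ' x) • B' x) ∧
    (∀ x, div3 B' x = 0) ∧ (∀ x, B' x ⬝ᵥ grad3 τ' x = 0) ∧
    (∀ x, ∃ c : ℝ, B' x = c • B x) := by
  subst hB' hτ' hpperp' hppar'
  -- basic derivative facts
  have hBj : ∀ (x : R3) (j : Fin 3), HasFDerivAt (fun y => B y j) (fderiv ℝ (fun y => B y j) x) x :=
    fun x j => ((differentiableAt_pi.mp ((hB.differentiable (by simp)) x)) j).hasFDerivAt
  have hMd : ∀ x : R3, HasFDerivAt M (fderiv ℝ M x) x :=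
    fun x => (hM.differentiable (by simp) x).hasFDerivAt
  have hPd : ∀ x : R3, HasFDerivAt P (fderiv ℝ P x) x :=
    fun x => (hP.differentiable (by simp) x).hasFDerivAt
  have hdot : ∀ x : R3, HasFDerivAt (fun y => B y ⬝ᵥ B y)
      (∑ j, (B x j • fderiv ℝ (fun y => B y j) x + B x j • fderiv ℝ (fun y => B y j) x)) x :=
    fun x => HasFDerivAt.fun_sum (fun j _ => (hBj x j).mul (hBj x j))
  -- product rule for M * B_j
  have hMB : ∀ (x : R3) (i j : Fin 3),
      pd i (fun y => M y * B y j) x = M x * pd i (fun y => B y j) x + B x j * pd i M x := by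
    intro x i j
    have h := (hMd x).fun_mul (hBj x j)
    rw [pd_eq' h]
    simp [pd, smul_eq_mul]
  -- gradient of τ'
  have hgτ : ∀ (x : R3) (i : Fin 3),
      pd i (fun y => 1 - 1 / (M y) ^ 2) x = 2 * pd i M x / (M x) ^ 3 := by
    intro x i
    have hg : HasDerivAt (fun t : ℝ => 1 - 1 / t ^ 2) (2 / (M x) ^ 3) (M x) := by
      have h1 : HasDerivAt (fun t : ℝ => t ^ 2) (2 * (M x) ^ 1) (M x) := by
        simpa using hasDerivAt_pow 2 (M x)
      have h2 := (h1.inv (pow_ne_zero 2 (hM0 x))).const_sub 1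
      rw [show (fun t : ℝ => 1 - 1 / t ^ 2) = fun t => 1 - (fun t : ℝ => t ^ 2)⁻¹ t from
        funext fun t => by simp [one_div]]
      refine h2.congr_deriv ?_
      field_simp [hM0 x]
    have h := hg.comp_hasFDerivAt x (hMd x)
    rw [show (fun y => 1 - 1/(M y)^2) = (fun t : ℝ => 1 - 1/t^2) ∘ M from rfl, pd_eq' h]
    simp [pd, smul_eq_mul]
    ring
  -- gradient of pperp'
  have hgp : ∀ (x : R3) (i : Fin 3),
      pd i (fun y => P₁ + P y + (1 - (M y) ^ 2) * (B y ⬝ᵥ B y) / 2) x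
      = pd i P x - M x * pd i M x * (B x ⬝ᵥ B x)
        + (1 - (M x) ^ 2) * ∑ j, B x j * pd i (fun y => B y j) x := by
    intro x i
    have hsq : HasFDerivAt (fun y => (M y) ^ 2) ((M x * 1 + M x * 1) • fderiv ℝ M x) x := by
      have := (hMd x).fun_mul (hMd x)
      rw [show (fun y => (M y)^2) = (fun y => M y * M y) from funext fun y => sq (M y) ▸ rfl]
      refine this.congr_fderiv ?_
      ext v; simp [smul_eq_mul]; ring
    have h := ((hPd x).const_add P₁).add (((hsq.const_sub 1).mul (hdot x)).mul_const (2:ℝ)⁻¹)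
    have h2 : HasFDerivAt (fun y => P₁ + P y + (1 - (M y) ^ 2) * (B y ⬝ᵥ B y) / 2) _ x := h
    rw [pd_eq' h2]
    simp only [ContinuousLinearMap.add_apply, ContinuousLinearMap.smul_apply,
      ContinuousLinearMap.sum_apply, Pi.smul_apply, smul_eq_mul,
      ContinuousLinearMap.neg_apply, pd]
    simp [Fin.sum_univ_three, dotProduct]
    ring
  -- gradient of |B'|^2/2
  have hgh : ∀ (x : R3) (i : Fin 3),
      pd i (fun y => ((M y • B y) ⬝ᵥ (M y • B y)) / 2) x
      = M x * pd i M x * (B x ⬝ᵥ B x)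
        + (M x) ^ 2 * ∑ j, B x j * pd i (fun y => B y j) x := by
    intro x i
    have hMBd : ∀ j : Fin 3, HasFDerivAt (fun y => M y * B y j)
        (M x • fderiv ℝ (fun y => B y j) x + B x j • fderiv ℝ M x) x :=
      fun j => (hMd x).mul (hBj x j)
    have h := (HasFDerivAt.fun_sum (u := Finset.univ)
      (fun j _ => (hMBd j).mul (hMBd j))).mul_const (2:ℝ)⁻¹
    have h2 : HasFDerivAt (fun y => ((M y • B y) ⬝ᵥ (M y • B y)) / 2) _ x := h
    rw [pd_eq' h2]
    simp only [ContinuousLinearMap.add_apply, ContinuousLinearMap.smul_apply,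
      ContinuousLinearMap.sum_apply, Pi.smul_apply, smul_eq_mul, pd]
    simp [Fin.sum_univ_three, dotProduct]
    ring
  -- componentwise momentum and field-line conditions
  have hmom0 : ∀ x : R3,
      (pd 2 (fun y => B y 0) x - pd 0 (fun y => B y 2) x) * B x 2
      - (pd 0 (fun y => B y 1) x - pd 1 (fun y => B y 0) x) * B x 1 = pd 0 P x := by
    intro x; have := congrFun (hmom x) 0
    simpa [cross_apply, curl3, grad3] using this
  have hmom1 : ∀ x : R3,
      (pd 0 (fun y => B y 1) x - pd 1 (fun y => B y 0) x) * B x 0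
      - (pd 1 (fun y => B y 2) x - pd 2 (fun y => B y 1) x) * B x 2 = pd 1 P x := by
    intro x; have := congrFun (hmom x) 1
    simpa [cross_apply, curl3, grad3] using this
  have hmom2 : ∀ x : R3,
      (pd 1 (fun y => B y 2) x - pd 2 (fun y => B y 1) x) * B x 1
      - (pd 2 (fun y => B y 0) x - pd 0 (fun y => B y 2) x) * B x 0 = pd 2 P x := by
    intro x; have := congrFun (hmom x) 2
    simpa [cross_apply, curl3, grad3] using this
  have hMl : ∀ x : R3,
      B x 0 * pd 0 M x + B x 1 * pd 1 M x + B x 2 * pd 2 M x = 0 := by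
    intro x; have := hMline x
    simpa [dotProduct, grad3, Fin.sum_univ_three] using this
  have hdivB : ∀ x : R3,
      pd 0 (fun y => B y 0) x + pd 1 (fun y => B y 1) x + pd 2 (fun y => B y 2) x = 0 := by
    intro x; have := hdiv x
    simpa [div3, Fin.sum_univ_three] using this
  refine ⟨?_, ?_, ?_, ?_, ?_⟩
  · -- pressure identity
    intro x
    simp only [dotProduct, Fin.sum_univ_three, Pi.smul_apply, smul_eq_mul]
    field_simp [hM0 x]
    ring
  · -- momentum equation
    intro x
    have hm := hM0 x
    funext i
    fin_cases i <;>
      simp only [Fin.zero_eta, Fin.mk_one, Fin.reduceFinMk, Fin.isValue, cross_apply, curl3,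
        grad3, Pi.add_apply, Pi.smul_apply, smul_eq_mul, Matrix.cons_val_zero,
        Matrix.cons_val_one, Matrix.head_cons, Matrix.cons_val_two, Matrix.tail_cons] <;>
      simp only [hgp, hgh] <;>
      simp only [dotProduct, Fin.sum_univ_three, Pi.smul_apply, smul_eq_mul] <;>
      simp only [grad3, hgτ, hMB] <;>
      field_simp [hm]
    · linear_combination M x * hmom0 x - B x 0 * hMl x
    · linear_combination M x * hmom1 x - B x 1 * hMl x
    · linear_combination M x * hmom2 x - B x 2 * hMl x
  · -- divergence-free
    intro x
    simp only [div3, Fin.sum_univ_three, Pi.smul_apply, smul_eq_mul]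
    simp only [hMB]
    linear_combination M x * hdivB x + hMl x
  · -- tau constant along field lines
    intro x
    simp only [dotProduct, grad3, Fin.sum_univ_three, Pi.smul_apply, smul_eq_mul]
    simp only [hgτ]
    field_simp [hM0 x]
    linear_combination 2 * hMl x
  · intro x
    exact ⟨M x, rfl⟩
end
end
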